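/- Let G be a subcubic graph and v a 2-vertex with incident edges e1, e2. If φ is a strong edge coloring of G − v from lists of size at least 10, then each e_i sees at most 8 colors under φ, so at least 2 colors remain available for each, and φ extends to a strong list edge coloring of G by coloring e1 then e2. -/

import Mathlib

def StrongSees {V : Type*} (G : SimpleGraph V) (e e' : Sym2 V) : Prop :=
  (∃ v, v ∈ e ∧ v ∈ e') ∨ (∃ u v, u ∈ e ∧ v ∈ e' ∧ G.Adj u v)

def IsStrongEdgeColoring {V β : Type*} (G : SimpleGraph V) (c : Sym2 V → β) : Prop :=
  ∀ e ∈ G.edgeSet, ∀ e' ∈ G.edgeSet, e ≠ e' → StrongSees G e e' → c e ≠ c e'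

/-- The graph obtained from `G` by deleting the vertex `v`. -/
def deleteVertex {V : Type*} (G : SimpleGraph V) (v : V) : SimpleGraph V where
  Adj x y := G.Adj x y ∧ x ≠ v ∧ y ≠ v
  symm := ⟨fun _ _ h => ⟨h.1.symm, h.2.2, h.2.1⟩⟩
  loopless := ⟨fun x h => G.loopless.irrefl x h.1⟩

lemma strongSees_iff {V : Type*} (G : SimpleGraph V) (e e' : Sym2 V) :
    StrongSees G e e' ↔
      ((∃ v, v ∈ e ∧ v ∈ e') ∨ (∃ u v, u ∈ e ∧ v ∈ e' ∧ G.Adj u v)) := Iff.rfl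

lemma strongSees_symm {V : Type*} {G : SimpleGraph V} {e e' : Sym2 V}
    (h : StrongSees G e e') : StrongSees G e' e := by
  rw [strongSees_iff] at h ⊢
  rcases h with ⟨x, hx, hx'⟩ | ⟨a, b, ha, hb, hab⟩
  · exact Or.inl ⟨x, hx', hx⟩
  · exact Or.inr ⟨b, a, hb, ha, hab.symm⟩

lemma mem_deleteVertex_edgeSet {V : Type*} (G : SimpleGraph V) (v : V) (e : Sym2 V) :
    e ∈ (deleteVertex G v).edgeSet ↔ e ∈ G.edgeSet ∧ v ∉ e := by
  induction e using Sym2.ind with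
  | _ a b =>
    simp only [SimpleGraph.mem_edgeSet, Sym2.mem_iff, not_or]
    constructor
    · rintro ⟨h, ha, hb⟩
      exact ⟨h, fun hva => ha hva.symm, fun hvb => hb hvb.symm⟩
    · rintro ⟨h, ha, hb⟩
      exact ⟨h, fun hav => ha hav.symm, fun hbv => hb hbv.symm⟩

lemma adj_of_two_mem {V : Type*} {G : SimpleGraph V} {e : Sym2 V} (he : e ∈ G.edgeSet)
    {x y : V} (hx : x ∈ e) (hy : y ∈ e) (hxy : x ≠ y) : G.Adj x y := by
  induction e using Sym2.ind with
  | _ a b =>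
    rw [Sym2.mem_iff] at hx hy
    rw [SimpleGraph.mem_edgeSet] at he
    rcases hx with rfl | rfl <;> rcases hy with rfl | rfl
    · exact absurd rfl hxy
    · exact he
    · exact he.symm
    · exact absurd rfl hxy

lemma ncard_edges_through_le {V : Type*} [Finite V] (G : SimpleGraph V) (x : V)
    (E : Set (Sym2 V)) (B : Set V)
    (hE : ∀ e ∈ E, e ∈ G.edgeSet ∧ x ∈ e)
    (hB : ∀ e ∈ E, ∀ y ∈ e, y ≠ x → y ∈ B) : E.ncard ≤ B.ncard := by
  classical
  apply Set.ncard_le_ncard_of_injOn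
    (fun e => if h : x ∈ e then Sym2.Mem.other h else x)
  · intro e he
    obtain ⟨hedge, hx⟩ := hE e he
    simp only [dif_pos hx]
    exact hB e he _ (Sym2.other_mem hx)
      (Sym2.other_ne (G.not_isDiag_of_mem_edgeSet hedge) hx)
  · intro e he e' he' hfe
    obtain ⟨_, hx⟩ := hE e he
    obtain ⟨_, hx'⟩ := hE e' he'
    simp only [dif_pos hx, dif_pos hx'] at hfe
    rw [← Sym2.other_spec hx, ← Sym2.other_spec hx', hfe]

lemma subset_pair_of_ncard_le_two {α : Type*} (S : Set α) (hS : S.Finite) (h : S.ncard ≤ 2)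
    (d : α) : ∃ a b, S ⊆ {a, b} := by
  rcases S.eq_empty_or_nonempty with rfl | ⟨a, ha⟩
  · exact ⟨d, d, by simp⟩
  rcases (S \ {a}).eq_empty_or_nonempty with h0 | ⟨b, hb⟩
  · refine ⟨a, a, fun x hx => ?_⟩
    have : x = a := by
      by_contra hxa
      exact absurd (by exact ⟨hx, hxa⟩ : x ∈ S \ {a}) (by simp [h0])
    simp [this]
  · refine ⟨a, b, fun x hx => ?_⟩
    by_contra hx'
    simp only [Set.mem_insert_iff, Set.mem_singleton_iff, not_or] at hx'
    have hab : a ≠ b := fun hab => hb.2 (by simp [hab.symm])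
    have hsub : ({x, a, b} : Set α) ⊆ S := by
      intro y hy
      rcases hy with rfl | rfl | rfl
      · exact hx
      · exact ha
      · exact hb.1
    have h3 : ({x, a, b} : Set α).ncard = 3 := by
      rw [Set.ncard_insert_of_notMem (by simp [hx'.1, hx'.2]), Set.ncard_pair hab]
    have := Set.ncard_le_ncard hsub hS
    omega

lemma seen_colors_le_eight {V β : Type*} [Fintype V] (G : SimpleGraph V) [DecidableRel G.Adj]
    (hΔ : G.maxDegree ≤ 3) (v u u1 u2 : V)
    (hNv : ∀ b, G.Adj v b → b = u1 ∨ b = u2) (hu : G.Adj v u)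
    (hu1 : G.Adj v u1) (hu2 : G.Adj v u2) (φ : Sym2 V → β) :
    {α | ∃ e' ∈ (deleteVertex G v).edgeSet, StrongSees G s(v, u) e' ∧ φ e' = α}.ncard ≤ 8 := by
  classical
  set H := deleteVertex G v with hH
  set A : V → Set (Sym2 V) := fun x => {e' | e' ∈ H.edgeSet ∧ x ∈ e'} with hA
  set D : V → Set (Sym2 V) := fun w => {e' | e' ∈ H.edgeSet ∧ w ∈ e' ∧ u ∉ e' ∧ G.Adj u w}
    with hD
  set E : Set (Sym2 V) := {e' | e' ∈ H.edgeSet ∧ StrongSees G s(v, u) e'} with hE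
  have hdeg : ∀ x, G.degree x ≤ 3 := fun x => (G.degree_le_maxDegree x).trans hΔ
  have hnb : ∀ x, (G.neighborSet x).ncard = G.degree x := fun x => by
    rw [Set.ncard_eq_toFinset_card']
    rfl
  have hdiff : ∀ x z, G.Adj x z → (G.neighborSet x \ {z}).ncard ≤ 2 := by
    intro x z hxz
    have hz : z ∈ G.neighborSet x := (G.mem_neighborSet x z).2 hxz
    rw [Set.ncard_diff_singleton_of_mem hz, hnb]
    have := hdeg x
    omega
  have hAb : ∀ x, G.Adj v x → (A x).ncard ≤ 2 := by
    intro x hvx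
    refine (ncard_edges_through_le G x (A x) (G.neighborSet x \ {v}) ?_ ?_).trans
      (hdiff x v hvx.symm)
    · intro e' he'
      exact ⟨((mem_deleteVertex_edgeSet G v e').1 he'.1).1, he'.2⟩
    · intro e' he' y hy hyx
      have hG := (mem_deleteVertex_edgeSet G v e').1 he'.1
      exact ⟨adj_of_two_mem hG.1 he'.2 hy (Ne.symm hyx), fun hyv => hG.2 (hyv ▸ hy)⟩
  have hDb : ∀ w, (D w).ncard ≤ 2 := by
    intro w
    by_cases huw : G.Adj u w
    · refine (ncard_edges_through_le G w (D w) (G.neighborSet w \ {u}) ?_ ?_).trans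
        (hdiff w u huw.symm)
      · intro e' he'
        exact ⟨((mem_deleteVertex_edgeSet G v e').1 he'.1).1, he'.2.1⟩
      · intro e' he' y hy hyw
        refine ⟨adj_of_two_mem ((mem_deleteVertex_edgeSet G v e').1 he'.1).1 he'.2.1 hy
          (Ne.symm hyw), fun hyu => he'.2.2.1 (hyu ▸ hy)⟩
    · have : D w = ∅ := by
        ext e'
        simp only [hD, Set.mem_setOf_eq, Set.mem_empty_iff_false, iff_false]
        rintro ⟨-, -, -, h⟩
        exact huw h
      rw [this]
      simp
  obtain ⟨w1, w2, hw⟩ := subset_pair_of_ncard_le_two (G.neighborSet u \ {v})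
    (Set.toFinite _) (hdiff u v hu.symm) v
  have hEsub : E ⊆ A u1 ∪ A u2 ∪ (D w1 ∪ D w2) := by
    rintro e' ⟨heH, hsee⟩
    have hGe' := (mem_deleteVertex_edgeSet G v e').1 heH
    have hvne : v ∉ e' := hGe'.2
    have hmemA : u ∈ e' → e' ∈ A u1 ∪ A u2 := by
      intro hue
      rcases hNv u hu with rfl | rfl
      · exact Or.inl ⟨heH, hue⟩
      · exact Or.inr ⟨heH, hue⟩
    simp only [Set.mem_union]
    rw [strongSees_iff] at hsee
    rcases hsee with ⟨x, hx, hx'⟩ | ⟨a, b, ha, hb, hab⟩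
    · rw [Sym2.mem_iff] at hx
      rcases hx with rfl | rfl
      · exact absurd hx' hvne
      · exact Or.inl (hmemA hx')
    · rw [Sym2.mem_iff] at ha
      rcases ha with rfl | rfl
      · rcases hNv b hab with rfl | rfl
        · exact Or.inl (Or.inl ⟨heH, hb⟩)
        · exact Or.inl (Or.inr ⟨heH, hb⟩)
      · by_cases hue : a ∈ e'
        · exact Or.inl (hmemA hue)
        · have hbmem : b ∈ G.neighborSet a \ {v} :=
            ⟨hab, fun hbv => hvne (hbv ▸ hb)⟩
          rcases hw hbmem with rfl | rfl
          · exact Or.inr (Or.inl ⟨heH, hb, hue, hab⟩)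
          · exact Or.inr (Or.inr ⟨heH, hb, hue, hab⟩)
  have himg : {α | ∃ e' ∈ H.edgeSet, StrongSees G s(v, u) e' ∧ φ e' = α} = φ '' E := by
    ext α
    simp only [Set.mem_image, Set.mem_setOf_eq, hE]
    tauto
  rw [himg]
  have h0 := Set.ncard_image_le (s := E) (f := φ) (Set.toFinite E)
  have h1 := Set.ncard_le_ncard hEsub (Set.toFinite _)
  have h2 := Set.ncard_union_le (A u1 ∪ A u2) (D w1 ∪ D w2)
  have h3 := Set.ncard_union_le (A u1) (A u2)
  have h4 := Set.ncard_union_le (D w1) (D w2)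
  have b1 := hAb u1 hu1
  have b2 := hAb u2 hu2
  have b3 := hDb w1
  have b4 := hDb w2
  omega


/-- If `v` has degree 2 with incident edges `e1, e2` and `φ` is a strong list
edge coloring of `G − v` (lists of size ≥ 10), then each `e_i` sees at most 8
colors, hence has at least 2 available colors, and `φ` extends to a strong list
edge coloring of `G`. -/
theorem extend_at_two_vertex {V β : Type*} [Fintype V]
    (G : SimpleGraph V) [DecidableRel G.Adj] (hΔ : G.maxDegree ≤ 3)
    (v : V) (hv : G.degree v = 2) (e1 e2 : Sym2 V)
    (he1 : e1 ∈ G.edgeSet) (he2 : e2 ∈ G.edgeSet) (hne : e1 ≠ e2)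
    (hve1 : v ∈ e1) (hve2 : v ∈ e2)
    (L : Sym2 V → Finset β) (hL : ∀ f ∈ G.edgeSet, 10 ≤ (L f).card)
    (φ : Sym2 V → β)
    (hφ : IsStrongEdgeColoring (deleteVertex G v) φ)
    (hφL : ∀ f ∈ (deleteVertex G v).edgeSet, φ f ∈ L f) :
    (∀ e ∈ ({e1, e2} : Set (Sym2 V)),
        {α | ∃ e' ∈ (deleteVertex G v).edgeSet, StrongSees G e e' ∧ φ e' = α}.ncard ≤ 8 ∧
        2 ≤ ((L e : Set β) \
          {α | ∃ e' ∈ (deleteVertex G v).edgeSet, StrongSees G e e' ∧ φ e' = α}).ncard) ∧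
      ∃ c : Sym2 V → β, IsStrongEdgeColoring G c ∧ (∀ f ∈ G.edgeSet, c f ∈ L f) ∧
        ∀ f ∈ (deleteVertex G v).edgeSet, c f = φ f := by
  classical
  -- endpoints of e1, e2
  set u1 := Sym2.Mem.other hve1 with hu1def
  set u2 := Sym2.Mem.other hve2 with hu2def
  have hu1spec : s(v, u1) = e1 := Sym2.other_spec hve1
  have hu2spec : s(v, u2) = e2 := Sym2.other_spec hve2
  have hadj1 : G.Adj v u1 := by rw [← SimpleGraph.mem_edgeSet, hu1spec]; exact he1
  have hadj2 : G.Adj v u2 := by rw [← SimpleGraph.mem_edgeSet, hu2spec]; exact he2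
  have hu12 : u1 ≠ u2 := fun h => hne (by rw [← hu1spec, ← hu2spec, h])
  have hNv : ∀ b, G.Adj v b → b = u1 ∨ b = u2 := by
    intro b hb
    have hsub : ({u1, u2} : Finset V) ⊆ G.neighborFinset v := by
      intro x hx
      rw [Finset.mem_insert, Finset.mem_singleton] at hx
      rcases hx with hx | hx
      · rw [hx]; exact (G.mem_neighborFinset v u1).2 hadj1
      · rw [hx]; exact (G.mem_neighborFinset v u2).2 hadj2
    have hcard : ({u1, u2} : Finset V).card = 2 := by
      rw [Finset.card_insert_of_notMem (by simpa using hu12), Finset.card_singleton]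
    have heq : G.neighborFinset v = {u1, u2} :=
      (Finset.eq_of_subset_of_card_le hsub (by
        rw [hcard, SimpleGraph.card_neighborFinset_eq_degree, hv])).symm
    have : b ∈ G.neighborFinset v := (G.mem_neighborFinset v b).2 hb
    rw [heq, Finset.mem_insert, Finset.mem_singleton] at this
    exact this
  -- part 1
  have key : ∀ e ∈ ({e1, e2} : Set (Sym2 V)),
      {α | ∃ e' ∈ (deleteVertex G v).edgeSet, StrongSees G e e' ∧ φ e' = α}.ncard ≤ 8 ∧
      2 ≤ ((L e : Set β) \
        {α | ∃ e' ∈ (deleteVertex G v).edgeSet, StrongSees G e e' ∧ φ e' = α}).ncard := by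
    intro e he
    have h8 : {α | ∃ e' ∈ (deleteVertex G v).edgeSet, StrongSees G e e' ∧ φ e' = α}.ncard ≤ 8 := by
      rcases he with rfl | rfl
      · rw [← hu1spec]
        exact seen_colors_le_eight G hΔ v u1 u1 u2 hNv hadj1 hadj1 hadj2 φ
      · rw [← hu2spec]
        exact seen_colors_le_eight G hΔ v u2 u1 u2 hNv hadj2 hadj1 hadj2 φ
    refine ⟨h8, ?_⟩
    have heG : e ∈ G.edgeSet := by rcases he with rfl | rfl; exacts [he1, he2]
    set S := {α | ∃ e' ∈ (deleteVertex G v).edgeSet, StrongSees G e e' ∧ φ e' = α}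
    have hSfin : S.Finite := by
      refine (Set.finite_range φ).subset ?_
      rintro α ⟨e', -, -, h⟩
      exact ⟨e', h⟩
    have hsplit : (L e : Set β) = ((L e : Set β) \ S) ∪ ((L e : Set β) ∩ S) := by
      ext x
      by_cases h : x ∈ S <;> simp [h]
    have h1 : ((L e : Set β)).ncard ≤ ((L e : Set β) \ S).ncard + ((L e : Set β) ∩ S).ncard := by
      calc ((L e : Set β)).ncard = (((L e : Set β) \ S) ∪ ((L e : Set β) ∩ S)).ncard := by
            rw [← hsplit]
        _ ≤ _ := Set.ncard_union_le _ _
    have h2 : ((L e : Set β) ∩ S).ncard ≤ S.ncard :=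
      Set.ncard_le_ncard Set.inter_subset_right hSfin
    have h3 : ((L e : Set β)).ncard = (L e).card := Set.ncard_coe_finset _
    have h4 := hL e heG
    omega
  refine ⟨key, ?_⟩
  -- choose colors
  have hK1 := (key e1 (Or.inl rfl)).2
  have hK2 := (key e2 (Or.inr rfl)).2
  set S1 := {α | ∃ e' ∈ (deleteVertex G v).edgeSet, StrongSees G e1 e' ∧ φ e' = α} with hS1
  set S2 := {α | ∃ e' ∈ (deleteVertex G v).edgeSet, StrongSees G e2 e' ∧ φ e' = α} with hS2
  obtain ⟨c1, hc1⟩ : ((L e1 : Set β) \ S1).Nonempty :=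
    Set.nonempty_of_ncard_ne_zero (by omega)
  obtain ⟨a, ha, b, hb, hab⟩ := (Set.one_lt_ncard (Set.toFinite _)).1 (by omega : 1 < ((L e2 : Set β) \ S2).ncard)
  set c2 := if a = c1 then b else a with hc2def
  have hc2 : c2 ∈ (L e2 : Set β) \ S2 ∧ c2 ≠ c1 := by
    by_cases h : a = c1
    · rw [hc2def, if_pos h]
      exact ⟨hb, fun hbc => hab (h ▸ hbc ▸ rfl)⟩
    · rw [hc2def, if_neg h]
      exact ⟨ha, h⟩
  set c : Sym2 V → β := fun f => if f = e1 then c1 else if f = e2 then c2 else φ f with hcdef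
  have hvnotH : ∀ f ∈ (deleteVertex G v).edgeSet, v ∉ f :=
    fun f hf => ((mem_deleteVertex_edgeSet G v f).1 hf).2
  have hce1 : c e1 = c1 := if_pos rfl
  have hce2 : c e2 = c2 := by
    rw [show c e2 = if e2 = e1 then c1 else if e2 = e2 then c2 else φ e2 from rfl,
      if_neg (Ne.symm hne), if_pos rfl]
  have hcH : ∀ f ∈ (deleteVertex G v).edgeSet, c f = φ f := by
    intro f hf
    have h1 : f ≠ e1 := fun h => hvnotH f hf (h ▸ hve1)
    have h2 : f ≠ e2 := fun h => hvnotH f hf (h ▸ hve2)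
    rw [hcdef]
    simp only [if_neg h1, if_neg h2]
  have htri : ∀ f ∈ G.edgeSet, f = e1 ∨ f = e2 ∨ f ∈ (deleteVertex G v).edgeSet := by
    intro f hf
    by_cases hvf : v ∈ f
    · have hspec : s(v, Sym2.Mem.other hvf) = f := Sym2.other_spec hvf
      have hadj : G.Adj v (Sym2.Mem.other hvf) := by
        rw [← SimpleGraph.mem_edgeSet, hspec]; exact hf
      rcases hNv _ hadj with h | h
      · exact Or.inl (by rw [← hspec, h, hu1spec])
      · exact Or.inr (Or.inl (by rw [← hspec, h, hu2spec]))
    · exact Or.inr (Or.inr ((mem_deleteVertex_edgeSet G v f).2 ⟨hf, hvf⟩))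
  have strongH : ∀ f f', f ∈ (deleteVertex G v).edgeSet → f' ∈ (deleteVertex G v).edgeSet →
      StrongSees G f f' → StrongSees (deleteVertex G v) f f' := by
    intro f f' hf hf' hsee
    rw [strongSees_iff] at hsee ⊢
    rcases hsee with ⟨x, hx, hx'⟩ | ⟨p, q, hp, hq, hpq⟩
    · exact Or.inl ⟨x, hx, hx'⟩
    · exact Or.inr ⟨p, q, hp, hq, hpq,
        fun h => hvnotH f hf (h ▸ hp), fun h => hvnotH f' hf' (h ▸ hq)⟩
  refine ⟨c, ?_, ?_, hcH⟩
  · intro e he e' he' hnee hsee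
    have hS1mem : ∀ f ∈ (deleteVertex G v).edgeSet, StrongSees G e1 f → φ f ∈ S1 :=
      fun f hf hs => ⟨f, hf, hs, rfl⟩
    have hS2mem : ∀ f ∈ (deleteVertex G v).edgeSet, StrongSees G e2 f → φ f ∈ S2 :=
      fun f hf hs => ⟨f, hf, hs, rfl⟩
    rcases htri e he with rfl | rfl | heH <;> rcases htri e' he' with h' | h' | h'H
    · exact absurd h' (Ne.symm hnee)
    · subst h'
      rw [hce1, hce2]
      exact fun h => hc2.2 h.symm
    · rw [hce1, hcH _ h'H]
      intro h
      exact hc1.2 (h ▸ hS1mem e' h'H hsee)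
    · subst h'
      rw [hce2, hce1]
      exact hc2.2
    · exact absurd h' (Ne.symm hnee)
    · rw [hce2, hcH _ h'H]
      intro h
      exact hc2.1.2 (h ▸ hS2mem e' h'H hsee)
    · subst h'
      rw [hcH _ heH, hce1]
      intro h
      exact hc1.2 (h.symm ▸ hS1mem e heH (strongSees_symm hsee))
    · subst h'
      rw [hcH _ heH, hce2]
      intro h
      exact hc2.1.2 (h.symm ▸ hS2mem e heH (strongSees_symm hsee))
    · rw [hcH _ heH, hcH _ h'H]
      exact hφ e heH e' h'H hnee (strongH e e' heH h'H hsee)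
  · intro f hf
    rcases htri f hf with rfl | rfl | hfH
    · rw [hce1]; exact hc1.1
    · rw [hce2]; exact hc2.1.1
    · rw [hcH _ hfH]; exact hφL f hfH
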